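/- Let A = kZ_n/I be a monomial Nakayama algebra on the basic n-cycle Z_n and let p be a nonzero nontrivial path in A. Then p is a perfect path if and only if both vertices s(p) and t(p) are θ-cyclically black, where θ(i) = [i + c_i], c_i = dim_k Ae_i, a vertex i is black if c_i ≤ c_{[i+1]}, and i is θ-cyclically black if i ∈ ⋂_{d≥0} Im θ^d and θ^d(i) is black for all d ≥ 0. -/

import Mathlib

universe u v w

/-- A presentation of the `k`-algebra `A` as a monomial algebra `kQ/I` on the quiver
with vertex type `V`: `ι` sends each path of `Q` to its canonical image in `A`
(with `ι (p.comp q) = ι q * ι p`, so that the paper's concatenation `pq`, defined when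
`s(p) = t(q)`, corresponds to the product `ι p * ι q`), and `Z p` means `p ∈ I`. -/
structure MonomialPresentation (k : Type u) (A : Type v) (V : Type w)
    [Field k] [Ring A] [Algebra k A] [Quiver.{w} V] [Fintype V] : Type (max u v w) where
  ι : ∀ {i j : V}, Quiver.Path i j → A
  Z : ∀ {i j : V}, Quiver.Path i j → Prop
  zero_iff : ∀ {i j : V} (p : Quiver.Path i j), ι p = 0 ↔ Z p
  mul_comp : ∀ {i j l : V} (p : Quiver.Path i j) (q : Quiver.Path j l),
    ι (p.comp q) = ι q * ι p
  orth : ∀ i j : V, i ≠ j →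
    ι (Quiver.Path.nil : Quiver.Path i i) * ι (Quiver.Path.nil : Quiver.Path j j) = 0
  sum_one : (∑ i : V, ι (Quiver.Path.nil : Quiver.Path i i)) = 1
  len_two : ∀ {i j : V} (p : Quiver.Path i j), Z p → 2 ≤ p.length
  admissible : ∃ d : ℕ, ∀ {i j : V} (p : Quiver.Path i j), d ≤ p.length → Z p
  z_mul : ∀ {i j l : V} (p : Quiver.Path i j) (q : Quiver.Path j l),
    Z p ∨ Z q → Z (p.comp q)
  indep : LinearIndependent k
    (fun x : {y : Σ i j : V, Quiver.Path i j // ¬ Z y.2.2} => ι x.1.2.2)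
  span_top : Submodule.span k
    (Set.range (fun x : Σ i j : V, Quiver.Path i j => ι x.2.2)) = ⊤

/-- The type of paths of a quiver, bundled with their endpoints. -/
abbrev PathIn (V : Type w) [Quiver.{w} V] : Type w := Σ i j : V, Quiver.Path i j

/-- The type of arrows of a quiver, bundled with their endpoints. -/
abbrev ArrowIn (V : Type w) [Quiver.{w} V] : Type w := Σ i j : V, (i ⟶ j)

/-- `x` is a sub-path of `y`. -/
def IsSubpathIn {V : Type w} [Quiver.{w} V] (x y : PathIn V) : Prop :=
  ∃ (r : Quiver.Path y.1 x.1) (s : Quiver.Path x.2.1 y.2.1),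
    y.2.2 = (r.comp x.2.2).comp s

namespace MonomialPresentation

variable {k : Type u} {A : Type v} {V : Type w}
  [Field k] [Ring A] [Algebra k A] [Quiver.{w} V] [Fintype V]
  (P : MonomialPresentation k A V)

/-- `L(p)`: the right-minimal paths `q` among the nonzero paths with
`s(q) = t(p)` and `qp = 0` in `A`. -/
def LSet {i j : V} (p : Quiver.Path i j) : Set (PathIn V) :=
  {q | ¬ P.Z q.2.2 ∧ q.1 = j ∧ P.ι q.2.2 * P.ι p = 0 ∧
    ¬ ∃ r u : PathIn V, ¬ P.Z r.2.2 ∧ r.1 = j ∧ P.ι r.2.2 * P.ι p = 0 ∧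
      1 ≤ u.2.2.length ∧ P.ι q.2.2 = P.ι u.2.2 * P.ι r.2.2}

/-- `R(p)`: the left-minimal paths `q` among the nonzero paths with
`t(q) = s(p)` and `pq = 0` in `A`. -/
def RSet {i j : V} (p : Quiver.Path i j) : Set (PathIn V) :=
  {q | ¬ P.Z q.2.2 ∧ q.2.1 = i ∧ P.ι p * P.ι q.2.2 = 0 ∧
    ¬ ∃ r u : PathIn V, ¬ P.Z r.2.2 ∧ r.2.1 = i ∧ P.ι p * P.ι r.2.2 = 0 ∧
      1 ≤ u.2.2.length ∧ P.ι q.2.2 = P.ι r.2.2 * P.ι u.2.2}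

/-- A perfect pair `(p, q)` of nonzero nontrivial paths with `s(p) = t(q)`:
`pq = 0`, `R(p) = {q}` and `L(q) = {p}`. -/
def PerfectPair {i j l : V} (p : Quiver.Path i j) (q : Quiver.Path l i) : Prop :=
  1 ≤ p.length ∧ 1 ≤ q.length ∧ ¬ P.Z p ∧ ¬ P.Z q ∧ P.Z (q.comp p) ∧
  (∀ (m : V) (q' : Quiver.Path m i), ¬ P.Z q' → P.Z (q'.comp p) →
    ∃ x : Quiver.Path m l, q' = x.comp q) ∧
  (∀ (m : V) (p' : Quiver.Path i m), ¬ P.Z p' → P.Z (q.comp p') →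
    ∃ y : Quiver.Path j m, p' = p.comp y)

/-- The perfect pair relation on bundled paths. -/
def PerfectPairS (x y : PathIn V) : Prop :=
  ∃ (i j l : V) (p : Quiver.Path i j) (q : Quiver.Path l i),
    x = ⟨i, j, p⟩ ∧ y = ⟨l, i, q⟩ ∧ P.PerfectPair p q

/-- A perfect path: a nonzero path `p` admitting a sequence
`p = p₁, p₂, …, pₙ, pₙ₊₁ = p` in which all consecutive pairs are perfect. -/
def IsPerfectPath (x : PathIn V) : Prop :=
  ∃ (n : ℕ) (c : Fin (n + 2) → PathIn V), c 0 = x ∧ c (Fin.last (n + 1)) = x ∧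
    ∀ m : Fin (n + 1), P.PerfectPairS (c m.castSucc) (c m.succ)

/-- `x ∈ F`: `x` is a minimal path contained in the ideal `I`. -/
def InF (x : PathIn V) : Prop :=
  P.Z x.2.2 ∧ ∀ y : PathIn V, IsSubpathIn y x → y ≠ x → ¬ P.Z y.2.2

/-- The algebra is quadratic monomial: all minimal relations have length two. -/
def Quadratic : Prop := ∀ x : PathIn V, P.InF x → x.2.2.length = 2

/-- The arrow relation of the relation quiver `R_A`: there is an arrow
`α → β` when `t(α) = s(β)` and `βα ∈ F`. -/
def RQ (x y : ArrowIn V) : Prop :=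
  ∃ (i j l : V) (α : i ⟶ j) (β : j ⟶ l), x = ⟨i, j, α⟩ ∧ y = ⟨j, l, β⟩ ∧
    P.InF ⟨i, l, (α.toPath).comp β.toPath⟩

/-- The two vertices of the relation quiver lie in the same connected component. -/
def Conn (x y : ArrowIn V) : Prop :=
  Relation.ReflTransGen (fun a b => P.RQ a b ∨ P.RQ b a) x y

/-- The connected component of `x` in the relation quiver is a basic cycle:
every vertex of the component has a unique successor and a unique predecessor. -/
def InPerfectComponent (x : ArrowIn V) : Prop :=
  ∀ y : ArrowIn V, P.Conn x y → (∃! z, P.RQ y z) ∧ (∃! z, P.RQ z y)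

/-- The connected component of `x` in the relation quiver contains no oriented cycle. -/
def InAcyclicComponent (x : ArrowIn V) : Prop :=
  ∀ y : ArrowIn V, P.Conn x y → ¬ Relation.TransGen P.RQ y y

end MonomialPresentation

/-- The quiver is a basic `n`-cycle. -/
def IsBasicCycleQuiver (V : Type w) [Quiver.{w} V] : Prop :=
  ∃ n : ℕ, 0 < n ∧ ∃ f : V ≃ ZMod n,
    (∀ i j : V, Nonempty (i ⟶ j) ↔ f j = f i + 1) ∧
    (∀ (i j : V) (a b : i ⟶ j), a = b)

/-- The underlying graph of the quiver is connected. -/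
def QuiverConnected (V : Type w) [Quiver.{w} V] : Prop :=
  Nonempty V ∧ ∀ i j : V,
    Relation.ReflTransGen (fun a b => Nonempty (a ⟶ b) ∨ Nonempty (b ⟶ a)) i j

/-- The quiver has no sources. -/
def NoSources (V : Type w) [Quiver.{w} V] : Prop := ∀ j : V, ∃ i : V, Nonempty (i ⟶ j)

/-- The quiver has no sinks. -/
def NoSinks (V : Type w) [Quiver.{w} V] : Prop := ∀ i : V, ∃ j : V, Nonempty (i ⟶ j)

/-- The basic `n`-cycle quiver on `ZMod n`: one arrow `i → i + 1` for each vertex. -/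
instance cycleQuiver (n : ℕ) : Quiver (ZMod n) := ⟨fun i j => PLift (j = i + 1)⟩

/-- The map `θ(i) = [i + c_i]` of Gustafson. -/
def thetaMap (n : ℕ) (c : ZMod n → ℕ) : ZMod n → ZMod n := fun t => t + (c t : ZMod n)

/-- The vertex `i` is black: `c_i ≤ c_{[i+1]}`, i.e. `P_i` is a minimal projective. -/
def Black (n : ℕ) (c : ZMod n → ℕ) (i : ZMod n) : Prop := c i ≤ c (i + 1)

/-- The vertex `i` is `θ`-cyclically black: `i ∈ ⋂_{e ≥ 0} Im θ^e` and `θ^e(i)` is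
black for all `e ≥ 0`. -/
def CyclicallyBlack (n : ℕ) (c : ZMod n → ℕ) (i : ZMod n) : Prop :=
  (∀ e : ℕ, ∃ a : ZMod n, (thetaMap n c)^[e] a = i) ∧
  (∀ e : ℕ, Black n c ((thetaMap n c)^[e] i))

section CycleAux

open Quiver

variable {n : ℕ}

lemma cycle_arrow_eq {i j : ZMod n} (a b : i ⟶ j) : a = b := by
  exact Subsingleton.elim (α := PLift (j = i + 1)) a b

@[simp] lemma cycle_target_eq {i j : ZMod n} (p : Quiver.Path i j) :
    j = i + (p.length : ZMod n) := by
  induction p with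
  | nil => simp
  | cons p' e ih =>
    have he := e.down
    rw [Quiver.Path.length_cons]
    push_cast
    linear_combination he + ih

lemma cycle_path_ext {i j : ZMod n} (p q : Quiver.Path i j)
    (h : p.length = q.length) : p = q := by
  induction p with
  | nil =>
    cases q with
    | nil => rfl
    | cons q' f => simp at h
  | cons p' e ih =>
    cases q with
    | nil => simp at h
    | cons q' f =>
      have hxy := add_right_cancel (f.down.symm.trans e.down)
      subst hxy
      rw [ih q' (by simpa using h), cycle_arrow_eq e f]

/-- Transport of a path along an equality of targets. -/
def castTgt {i j j' : ZMod n} (h : j = j') (p : Quiver.Path i j) :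
    Quiver.Path i j' := h ▸ p

@[simp] lemma length_castTgt {i j j' : ZMod n} (h : j = j') (p : Quiver.Path i j) :
    (castTgt h p).length = p.length := by subst h; rfl

/-- The unique path of length `m` starting at `i` in the cycle quiver. -/
def pathFrom (i : ZMod n) : (m : ℕ) → Quiver.Path i (i + (m : ZMod n))
  | 0 => castTgt (by simp) Quiver.Path.nil
  | m+1 => Quiver.Path.cons (pathFrom i m) (PLift.up (by push_cast; ring))

@[simp] lemma length_pathFrom (i : ZMod n) (m : ℕ) : (pathFrom i m).length = m := by
  induction m with
  | zero => simp [pathFrom]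
  | succ m ih => simp [pathFrom, ih]

lemma path_repr {i j : ZMod n} (p : Quiver.Path i j) :
    ∃ h : i + ((p.length : ℕ) : ZMod n) = j, p = castTgt h (pathFrom i p.length) := by
  refine ⟨(cycle_target_eq p).symm, ?_⟩
  exact cycle_path_ext _ _ (by simp)

end CycleAux
section PresAux

open Quiver MonomialPresentation

variable {k : Type u} {A : Type v} {n : ℕ} [NeZero n]
  [Field k] [Ring A] [Algebra k A]
  (P : MonomialPresentation k A (ZMod n))

lemma Z_castTgt {i j j' : ZMod n} (h : j = j') (p : Quiver.Path i j) :
    P.Z (castTgt h p) ↔ P.Z p := by subst h; exact Iff.rfl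

lemma iota_castTgt {i j j' : ZMod n} (h : j = j') (p : Quiver.Path i j) :
    P.ι (castTgt h p) = P.ι p := by subst h; rfl

lemma Z_iff_Zlen {i j : ZMod n} (p : Quiver.Path i j) :
    P.Z p ↔ P.Z (pathFrom i p.length) := by
  obtain ⟨h, hp⟩ := path_repr p
  conv_lhs => rw [hp]
  exact Z_castTgt P h _

lemma Zlen_exists (i : ZMod n) : ∃ m : ℕ, P.Z (pathFrom i m) := by
  obtain ⟨d, hd⟩ := P.admissible
  exact ⟨d, hd _ (by simp)⟩

/-- `NN P i` : the dimension of the projective `A·e_i`, combinatorially: the least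
length of a zero path out of `i`. -/
noncomputable def NN (P : MonomialPresentation k A (ZMod n)) (i : ZMod n) : ℕ :=
  @Nat.find _ (Classical.decPred _) (Zlen_exists P i)

lemma NN_spec (i : ZMod n) : P.Z (pathFrom i (NN P i)) :=
  @Nat.find_spec _ (Classical.decPred _) (Zlen_exists P i)

lemma NN_min {i : ZMod n} {m : ℕ} (h : m < NN P i) : ¬ P.Z (pathFrom i m) :=
  @Nat.find_min _ (Classical.decPred _) (Zlen_exists P i) _ h

lemma Zlen_mono {i : ZMod n} {m m' : ℕ} (h : P.Z (pathFrom i m)) (hm : m ≤ m') :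
    P.Z (pathFrom i m') := by
  have hz := P.z_mul (pathFrom i m) (pathFrom (i + (m : ZMod n)) (m' - m)) (Or.inl h)
  have := (Z_iff_Zlen P _).mp hz
  rwa [Quiver.Path.length_comp, length_pathFrom, length_pathFrom,
    Nat.add_sub_cancel' hm] at this

lemma Z_iff_NN {i j : ZMod n} (p : Quiver.Path i j) :
    P.Z p ↔ NN P i ≤ p.length := by
  rw [Z_iff_Zlen]
  constructor
  · intro h
    by_contra hlt
    exact NN_min P (by omega) h
  · intro h
    exact Zlen_mono P (NN_spec P i) h

lemma two_le_NN (i : ZMod n) : 2 ≤ NN P i := by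
  have := P.len_two _ (NN_spec P i)
  simpa using this

lemma NN_le_succ (i : ZMod n) : NN P i ≤ NN P (i + 1) + 1 := by
  -- the path of length `NN (i+1)` from `i+1` is zero; prefixing the arrow `i → i+1`
  -- gives a zero path of length `NN (i+1) + 1` from `i`... we need the converse:
  -- a zero path from `i+1` extends to a zero path from `i`? No: z_mul needs one zero factor.
  have hz : P.Z ((Quiver.Hom.toPath (PLift.up rfl : i ⟶ i + 1)).comp
      (pathFrom (i + 1) (NN P (i + 1)))) :=
    P.z_mul _ _ (Or.inr (NN_spec P (i + 1)))
  have := (Z_iff_NN P _).mp hz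
  simp only [Quiver.Path.length_comp, length_pathFrom, Quiver.Hom.toPath,
    Quiver.Path.length_cons, Quiver.Path.length_nil] at this
  omega

end PresAux
section DimAux

open Quiver MonomialPresentation

variable {k : Type u} {A : Type v} {n : ℕ} [NeZero n]
  [Field k] [Ring A] [Algebra k A]
  (P : MonomialPresentation k A (ZMod n))

lemma iota_mul_nil {i j : ZMod n} (p : Quiver.Path i j) :
    P.ι p * P.ι (Quiver.Path.nil : Quiver.Path i i) = P.ι p := by
  have := P.mul_comp (Quiver.Path.nil : Quiver.Path i i) p
  rw [Quiver.Path.nil_comp] at this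
  exact this.symm

lemma iota_mul_nil_ne {i v w : ZMod n} (p : Quiver.Path v w) (hvi : v ≠ i) :
    P.ι p * P.ι (Quiver.Path.nil : Quiver.Path i i) = 0 := by
  rw [← iota_mul_nil P p, mul_assoc, P.orth v i hvi, mul_zero]

lemma iota_pathFrom_length {i j : ZMod n} (p : Quiver.Path i j) :
    P.ι p = P.ι (pathFrom i p.length) := by
  obtain ⟨h, hp⟩ := path_repr p
  conv_lhs => rw [hp]
  exact iota_castTgt P h _

/-- The `k`-dimension of the projective `A·e_i` is `NN P i`. -/
lemma finrank_eq_NN (i : ZMod n) :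
    Module.finrank k ((Submodule.span A
      {P.ι (Quiver.Path.nil : Quiver.Path i i)}).restrictScalars k) = NN P i := by
  classical
  set e : A := P.ι (Quiver.Path.nil : Quiver.Path i i) with he
  set fam : Fin (NN P i) → A := fun m => P.ι (pathFrom i (m : ℕ)) with hfam
  have hfam_nz : ∀ m : Fin (NN P i), ¬ P.Z (pathFrom i (m : ℕ)) :=
    fun m => NN_min P m.isLt
  -- linear independence of the family
  have hinj : Function.Injective
      (fun m : Fin (NN P i) =>
        (⟨⟨i, i + ((m : ℕ) : ZMod n), pathFrom i (m : ℕ)⟩, hfam_nz m⟩ :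
          {y : PathIn (ZMod n) // ¬ P.Z y.2.2})) := by
    intro m m' hmm
    have h2 := congrArg (fun y : {y : PathIn (ZMod n) // ¬ P.Z y.2.2} =>
      y.1.2.2.length) hmm
    have h3 : (m : ℕ) = (m' : ℕ) := by simpa using h2
    exact Fin.ext h3
  have hLI : LinearIndependent k fam := by
    have := P.indep.comp _ hinj
    exact this
  -- the span equality
  have hspan : (Submodule.span A ({e} : Set A)).restrictScalars k =
      Submodule.span k (Set.range fam) := by
    apply le_antisymm
    · intro x hx
      rw [Submodule.restrictScalars_mem, Submodule.mem_span_singleton] at hx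
      obtain ⟨a, rfl⟩ := hx
      rw [smul_eq_mul]
      have htop : a ∈ Submodule.span k
          (Set.range (fun x : Σ i j : ZMod n, Quiver.Path i j => P.ι x.2.2)) := by
        rw [P.span_top]; trivial
      refine Submodule.span_induction
        (p := fun a _ => a * e ∈ Submodule.span k (Set.range fam)) ?_ ?_ ?_ ?_ htop
      · rintro x ⟨⟨v, w, q⟩, rfl⟩
        simp only
        by_cases hvi : v = i
        · subst hvi
          rw [he, iota_mul_nil P q]
          by_cases hzq : P.Z q
          · rw [(P.zero_iff q).mpr hzq]
            exact Submodule.zero_mem _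
          · have hlt : q.length < NN P v := by
              by_contra hge
              exact hzq ((Z_iff_NN P q).mpr (by omega))
            rw [iota_pathFrom_length P q]
            exact Submodule.subset_span ⟨⟨q.length, hlt⟩, rfl⟩
        · rw [he, iota_mul_nil_ne P q hvi]
          exact Submodule.zero_mem _
      · show (0 : A) * e ∈ Submodule.span k (Set.range fam)
        rw [zero_mul]; exact Submodule.zero_mem _
      · intro x y hx' hy' hx hy
        show (x + y) * e ∈ Submodule.span k (Set.range fam)
        rw [add_mul]; exact Submodule.add_mem _ hx hy
      · intro r x hx' hx
        show (r • x) * e ∈ Submodule.span k (Set.range fam)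
        rw [smul_mul_assoc]
        exact Submodule.smul_mem _ r hx
    · rw [Submodule.span_le]
      rintro x ⟨m, rfl⟩
      rw [SetLike.mem_coe, Submodule.restrictScalars_mem, Submodule.mem_span_singleton]
      exact ⟨P.ι (pathFrom i (m : ℕ)), by rw [smul_eq_mul, he, iota_mul_nil]⟩
  rw [hspan, finrank_span_eq_card hLI, Fintype.card_fin]

end DimAux
section PairAux

open Quiver MonomialPresentation

variable {k : Type u} {A : Type v} {n : ℕ} [NeZero n]
  [Field k] [Ring A] [Algebra k A]

lemma c_chain {c : ZMod n → ℕ} (hch : ∀ v : ZMod n, c v ≤ c (v + 1) + 1) :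
    ∀ (s : ℕ) (v : ZMod n), c v ≤ c (v + (s : ZMod n)) + s := by
  intro s
  induction s with
  | zero => intro v; simp
  | succ s ih =>
    intro v
    have h1 := hch v
    have h2 := ih (v + 1)
    have hv : (v + 1) + (s : ZMod n) = v + ((s + 1 : ℕ) : ZMod n) := by
      push_cast; ring
    rw [hv] at h2
    omega

lemma perfectPair_iff (P : MonomialPresentation k A (ZMod n)) (c : ZMod n → ℕ)
    (hzc : ∀ {v w : ZMod n} (r : Quiver.Path v w), P.Z r ↔ c v ≤ r.length)
    (hch : ∀ v : ZMod n, c v ≤ c (v + 1) + 1)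
    {i j l : ZMod n} (p : Quiver.Path i j) (q : Quiver.Path l i) :
    P.PerfectPair p q ↔ (1 ≤ p.length ∧ 1 ≤ q.length ∧
      p.length + q.length = c l ∧ p.length < c i ∧ Black n c l) := by
  have hil : i = l + ((q.length : ℕ) : ZMod n) := cycle_target_eq q
  have hji : j = i + ((p.length : ℕ) : ZMod n) := cycle_target_eq p
  constructor
  · rintro ⟨h1, h2, h3, h4, h5, h6, h7⟩
    have ha : p.length < c i := by
      rw [hzc p] at h3; omega
    have hb : q.length < c l := by
      rw [hzc q] at h4; omega
    have hcl : c l ≤ q.length + p.length := by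
      have := (hzc _).mp h5
      rwa [Quiver.Path.length_comp] at this
    have cond7 : ∀ m : ℕ, m < c i → c l ≤ q.length + m → p.length ≤ m := by
      intro m hm1 hm2
      have hnz : ¬ P.Z (pathFrom i m) := by
        rw [hzc]; simp only [length_pathFrom]; omega
      have hz : P.Z (q.comp (pathFrom i m)) := by
        rw [hzc]; simp only [Quiver.Path.length_comp, length_pathFrom]; omega
      obtain ⟨y, hy⟩ := h7 _ (pathFrom i m) hnz hz
      have hlen := congrArg Quiver.Path.length hy
      simp only [Quiver.Path.length_comp, length_pathFrom] at hlen
      omega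
    have cond6 : ∀ m : ℕ, m < c (i - (m : ZMod n)) → c (i - (m : ZMod n)) ≤ m + p.length →
        q.length ≤ m := by
      intro m hm1 hm2
      have hvm : (i - (m : ZMod n)) + ((m : ℕ) : ZMod n) = i := by ring
      have hq'len : (castTgt hvm (pathFrom (i - (m : ZMod n)) m)).length = m := by simp
      have hnz : ¬ P.Z (castTgt hvm (pathFrom (i - (m : ZMod n)) m)) := by
        rw [hzc, hq'len]; omega
      have hz : P.Z ((castTgt hvm (pathFrom (i - (m : ZMod n)) m)).comp p) := by
        rw [hzc, Quiver.Path.length_comp, hq'len]; omega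
      obtain ⟨x, hx⟩ := h6 _ _ hnz hz
      have hlen := congrArg Quiver.Path.length hx
      rw [hq'len, Quiver.Path.length_comp] at hlen
      omega
    have hab : p.length + q.length = c l := by
      have h := cond7 (c l - q.length) (by omega) (by omega)
      omega
    have hbl : Black n c l := by
      by_contra hbl
      have hbl' : c (l + 1) < c l := by
        simp only [Black, not_le] at hbl; exact hbl
      have hv : i - (((q.length - 1 : ℕ)) : ZMod n) = l + 1 := by
        rw [Nat.cast_sub h2]
        linear_combination hil
      have hch' := hch l
      have h6' := cond6 (q.length - 1) (by rw [hv]; omega) (by rw [hv]; omega)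
      omega
    exact ⟨h1, h2, hab, ha, hbl⟩
  · rintro ⟨h1, h2, hab, ha, hbl⟩
    have hbl' : c l ≤ c (l + 1) := hbl
    refine ⟨h1, h2, ?_, ?_, ?_, ?_, ?_⟩
    · rw [hzc]; omega
    · rw [hzc]; omega
    · rw [hzc, Quiver.Path.length_comp]; omega
    · -- the L-condition
      intro v q'' hnz hz
      have hiv : i = v + ((q''.length : ℕ) : ZMod n) := cycle_target_eq q''
      have hm1 : q''.length < c v := by rw [hzc] at hnz; omega
      have hm2 : c v ≤ q''.length + p.length := by
        rw [hzc, Quiver.Path.length_comp] at hz; omega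
      have hbm : q.length ≤ q''.length := by
        by_contra hlt
        push_neg at hlt
        have hveq : v = l + (((q.length - q''.length : ℕ)) : ZMod n) := by
          rw [Nat.cast_sub hlt.le]
          have h' : l + ((q.length : ℕ) : ZMod n) = v + ((q''.length : ℕ) : ZMod n) :=
            hil.symm.trans hiv
          linear_combination -h'
        have key1 : c l ≤ c v + (q.length - q''.length) := by
          have := c_chain hch (q.length - q''.length) l
          rwa [← hveq] at this
        have key2 : c (l + 1) ≤ c v + (q.length - q''.length - 1) := by
          have h3 := c_chain hch (q.length - q''.length - 1) (l + 1)
          have hv2 : (l + 1) + (((q.length - q''.length - 1 : ℕ)) : ZMod n) = v := by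
            rw [Nat.cast_sub (show 1 ≤ q.length - q''.length by omega)]
            linear_combination -hveq
          rwa [hv2] at h3
        omega
      have hx : v + (((q''.length - q.length : ℕ)) : ZMod n) = l := by
        rw [Nat.cast_sub hbm]
        have h' : l + ((q.length : ℕ) : ZMod n) = v + ((q''.length : ℕ) : ZMod n) :=
          hil.symm.trans hiv
        linear_combination -h'
      refine ⟨castTgt hx (pathFrom v (q''.length - q.length)), ?_⟩
      apply cycle_path_ext
      rw [Quiver.Path.length_comp, length_castTgt, length_pathFrom]
      omega
    · -- the R-condition
      intro w p'' hnz hz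
      have hiw : w = i + ((p''.length : ℕ) : ZMod n) := cycle_target_eq p''
      have hm1 : p''.length < c i := by rw [hzc] at hnz; omega
      have hm2 : c l ≤ q.length + p''.length := by
        rw [hzc, Quiver.Path.length_comp] at hz; omega
      have ham : p.length ≤ p''.length := by omega
      have hy : j + (((p''.length - p.length : ℕ)) : ZMod n) = w := by
        rw [Nat.cast_sub ham]
        linear_combination hji - hiw
      refine ⟨castTgt hy (pathFrom j (p''.length - p.length)), ?_⟩
      apply cycle_path_ext
      rw [Quiver.Path.length_comp, length_castTgt, length_pathFrom]
      omega

end PairAux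
section IntLift

variable {n : ℕ} [NeZero n]

/-- The integer lift of the Gustafson map `θ`. -/
def tl (c : ZMod n → ℕ) (x : ℤ) : ℤ := x + c (x : ZMod n)

lemma tl_cast (c : ZMod n → ℕ) (x : ℤ) :
    ((tl c x : ℤ) : ZMod n) = thetaMap n c ((x : ℤ) : ZMod n) := by
  simp only [tl, thetaMap]
  push_cast
  ring

lemma tl_iter_cast (c : ZMod n → ℕ) (K : ℕ) (x : ℤ) :
    (((tl c)^[K] x : ℤ) : ZMod n) = (thetaMap n c)^[K] ((x : ℤ) : ZMod n) := by
  induction K generalizing x with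
  | zero => rfl
  | succ K ih =>
    rw [Function.iterate_succ_apply, Function.iterate_succ_apply, ih, tl_cast]

lemma tl_mono (c : ZMod n → ℕ) (hch : ∀ v : ZMod n, c v ≤ c (v + 1) + 1) :
    Monotone (tl c) := by
  apply monotone_int_of_le_succ
  intro x
  have h := hch ((x : ℤ) : ZMod n)
  have hx1 : ((x + 1 : ℤ) : ZMod n) = ((x : ℤ) : ZMod n) + 1 := by push_cast; ring
  simp only [tl, hx1]
  omega

lemma tl_add_mul (c : ZMod n → ℕ) (x t : ℤ) :
    tl c (x + (n : ℤ) * t) = tl c x + (n : ℤ) * t := by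
  have hcast : ((x + (n : ℤ) * t : ℤ) : ZMod n) = ((x : ℤ) : ZMod n) := by
    push_cast [ZMod.natCast_self]
    ring
  simp only [tl, hcast]
  ring

lemma tl_iter_add_mul (c : ZMod n → ℕ) (K : ℕ) (x t : ℤ) :
    (tl c)^[K] (x + (n : ℤ) * t) = (tl c)^[K] x + (n : ℤ) * t := by
  induction K generalizing x with
  | zero => rfl
  | succ K ih =>
    rw [Function.iterate_succ_apply, Function.iterate_succ_apply, tl_add_mul, ih]

lemma cast_intCast_val (v : ZMod n) : (((v.val : ℤ) : ℤ) : ZMod n) = v := by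
  push_cast
  simp [ZMod.natCast_val, ZMod.cast_id]

/-- Key step lemma: if `a < c v` and `θ(w) = v + a` then `a < c w`. -/
lemma step_lemma (c : ZMod n → ℕ) (hch : ∀ v : ZMod n, c v ≤ c (v + 1) + 1)
    {v w : ZMod n} {a : ℕ} (hav : a < c v)
    (hw : thetaMap n c w = v + (a : ZMod n)) : a < c w := by
  have hw' : w + ((c w : ℕ) : ZMod n) = v + (a : ZMod n) := hw
  set x : ℤ := (v.val : ℤ) with hxdef
  have hxv : ((x : ℤ) : ZMod n) = v := cast_intCast_val v
  set z : ℤ := x + (a : ℤ) - (c w : ℤ) with hzdef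
  have hz : ((z : ℤ) : ZMod n) = w := by
    rw [hzdef]
    push_cast [hxv]
    linear_combination -hw'
  have htlz : tl c z = x + (a : ℤ) := by
    simp only [tl, hz]
    rw [hzdef]
    push_cast
    ring
  have htlx : tl c x = x + (c v : ℤ) := by simp only [tl, hxv]
  have hzx : z < x := by
    by_contra hle
    push_neg at hle
    have hmono := tl_mono c hch hle
    rw [htlz, htlx] at hmono
    omega
  omega

lemma rot_aux (c : ZMod n → ℕ) (hch : ∀ v : ZMod n, c v ≤ c (v + 1) + 1) (K : ℕ)
    {x y : ℤ}
    (hx : (thetaMap n c)^[K] ((x : ℤ) : ZMod n) = ((x : ℤ) : ZMod n))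
    (hy : (thetaMap n c)^[K] ((y : ℤ) : ZMod n) = ((y : ℤ) : ZMod n))
    (hxy : x ≤ y) (hyx : y < x + (n : ℤ)) :
    (tl c)^[K] x - x ≤ (tl c)^[K] y - y := by
  have hdvd : (n : ℤ) ∣ (((tl c)^[K] x - x) - ((tl c)^[K] y - y)) := by
    apply (ZMod.intCast_zmod_eq_zero_iff_dvd _ _).mp
    push_cast [tl_iter_cast, hx, hy]
    ring
  have hm := ((tl_mono c hch).iterate K) hxy
  by_contra hlt
  push_neg at hlt
  obtain ⟨t, ht⟩ := hdvd
  have hn : (0 : ℤ) < (n : ℤ) := by exact_mod_cast Nat.pos_of_ne_zero (NeZero.ne n)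
  have ht1 : (n : ℤ) * t < (n : ℤ) * 1 := by omega
  have ht2 : t < 1 := lt_of_mul_lt_mul_left ht1 hn.le
  have ht3 : (n : ℤ) * t ≤ 0 := mul_nonpos_of_nonneg_of_nonpos hn.le (by omega)
  omega

lemma rot_le (c : ZMod n → ℕ) (hch : ∀ v : ZMod n, c v ≤ c (v + 1) + 1) (K : ℕ)
    {u w : ZMod n} (hu : (thetaMap n c)^[K] u = u) (hw : (thetaMap n c)^[K] w = w)
    {x y : ℤ} (hx : ((x : ℤ) : ZMod n) = u) (hy : ((y : ℤ) : ZMod n) = w) :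
    (tl c)^[K] x - x ≤ (tl c)^[K] y - y := by
  have hn : (0 : ℤ) < (n : ℤ) := by exact_mod_cast Nat.pos_of_ne_zero (NeZero.ne n)
  set y'' : ℤ := x + (((w - u).val : ℕ) : ℤ) with hy''def
  have hy''c : ((y'' : ℤ) : ZMod n) = w := by
    rw [hy''def]
    push_cast [hx]
    rw [ZMod.natCast_val, ZMod.cast_id]
    ring
  have hval : ((w - u).val : ℤ) < (n : ℤ) := by
    exact_mod_cast ZMod.val_lt (w - u)
  have hvnn : (0 : ℤ) ≤ ((w - u).val : ℤ) := Int.natCast_nonneg _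
  have h1 : (tl c)^[K] x - x ≤ (tl c)^[K] y'' - y'' := by
    apply rot_aux c hch K
    · rw [hx]; exact hu
    · rw [hy''c]; exact hw
    · omega
    · omega
  have hdvd : (n : ℤ) ∣ (y'' - y) := by
    apply (ZMod.intCast_zmod_eq_zero_iff_dvd _ _).mp
    push_cast [hy''c, hy]
    ring
  obtain ⟨t, ht⟩ := hdvd
  have hyy : y'' = y + (n : ℤ) * t := by omega
  have h2 : (tl c)^[K] y'' = (tl c)^[K] y + (n : ℤ) * t := by
    rw [hyy, tl_iter_add_mul]
  omega

lemma rot (c : ZMod n → ℕ) (hch : ∀ v : ZMod n, c v ≤ c (v + 1) + 1) (K : ℕ)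
    {u w : ZMod n} (hu : (thetaMap n c)^[K] u = u) (hw : (thetaMap n c)^[K] w = w)
    {x y : ℤ} (hx : ((x : ℤ) : ZMod n) = u) (hy : ((y : ℤ) : ZMod n) = w) :
    (tl c)^[K] x - x = (tl c)^[K] y - y :=
  le_antisymm (rot_le c hch K hu hw hx hy) (rot_le c hch K hw hu hy hx)

/-- A point in every iterated image of a self-map of a finite type is periodic. -/
lemma exists_period (f : ZMod n → ZMod n) {i : ZMod n}
    (h : ∀ e : ℕ, ∃ a : ZMod n, f^[e] a = i) :
    ∃ K : ℕ, 1 ≤ K ∧ f^[K] i = i := by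
  obtain ⟨b, hb⟩ := h n
  have key : ∀ u v : ℕ, u < v → v ≤ n → f^[u] b = f^[v] b →
      ∃ K : ℕ, 1 ≤ K ∧ f^[K] i = i := by
    intro u v huv hvn hfb
    refine ⟨v - u, by omega, ?_⟩
    rw [← hb, ← Function.iterate_add_apply]
    have h1 : v - u + n = (n - u) + v := by omega
    rw [h1, Function.iterate_add_apply, ← hfb, ← Function.iterate_add_apply]
    have h2 : n - u + u = n := by omega
    rw [h2]
  have hcard : Fintype.card (ZMod n) < Fintype.card (Fin (n + 1)) := by
    rw [ZMod.card, Fintype.card_fin]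
    omega
  obtain ⟨s, t, hst, hfst⟩ :=
    Fintype.exists_ne_map_eq_of_card_lt (fun s : Fin (n + 1) => f^[(s : ℕ)] b) hcard
  rcases Ne.lt_or_gt hst with h' | h'
  · exact key s t h' (by omega) hfst
  · exact key t s h' (by omega) hfst.symm

end IntLift
section Dynamics

variable {n : ℕ} [NeZero n]

lemma dynamics_lemma (c : ZMod n → ℕ) (S : ℕ → ZMod n) (Aa : ℕ → ℕ) (T : ℕ)
    (hT : 1 ≤ T)
    (hSper : ∀ t, S (t + T) = S t)
    (hrel : ∀ t, S t = S (t + 1) + ((Aa (t + 1) : ℕ) : ZMod n))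
    (hsum : ∀ t, Aa t + Aa (t + 1) = c (S (t + 1)))
    (hblack : ∀ t, Black n c (S (t + 1))) :
    CyclicallyBlack n c (S 0) ∧ CyclicallyBlack n c (S 0 + ((Aa 0 : ℕ) : ZMod n)) := by
  set th := thetaMap n c with hth
  have hblackall : ∀ t, Black n c (S t) := by
    intro t
    cases t with
    | zero =>
      have := hblack (T - 1)
      rwa [show T - 1 + 1 = 0 + T by omega, hSper 0] at this
    | succ t => exact hblack t
  have hθ : ∀ t, th (S (t + 2)) = S t := by
    intro t
    have h1 := hsum (t + 1)
    have h2 := hrel (t + 1)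
    have h3 := hrel t
    rw [hth]
    show S (t + 2) + ((c (S (t + 2)) : ℕ) : ZMod n) = S t
    rw [← h1]
    push_cast
    rw [h3, h2]
    push_cast
    ring
  have hiter : ∀ (s t : ℕ), th^[s] (S (t + 2 * s)) = S t := by
    intro s
    induction s with
    | zero => intro t; simp
    | succ s ih =>
      intro t
      have harg : t + 2 * (s + 1) = (t + 2) + 2 * s := by omega
      rw [harg, Function.iterate_succ_apply', ih (t + 2), hθ t]
  have hperk : ∀ (m t : ℕ), S (t + m * T) = S t := by
    intro m
    induction m with
    | zero => intro t; simp
    | succ m ih =>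
      intro t
      have harg : t + (m + 1) * T = (t + T) + m * T := by ring
      rw [harg, ih (t + T), hSper]
  constructor
  · constructor
    · intro e
      exact ⟨S (2 * e), by simpa using hiter e 0⟩
    · intro e
      have h0 : S 0 = S (0 + (2 * e) * T) := (hperk (2 * e) 0).symm
      have harg : 0 + (2 * e) * T = (2 * e * T - 2 * e) + 2 * e := by
        have : 2 * e ≤ 2 * e * T := Nat.le_mul_of_pos_right _ (by omega)
        omega
      rw [h0, harg, hiter e (2 * e * T - 2 * e)]
      exact hblackall _
  · have hJ : S 0 + ((Aa 0 : ℕ) : ZMod n) = th (S 1) := by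
      have h1 := hsum 0
      have h3 := hrel 0
      rw [hth]
      show S 0 + ((Aa 0 : ℕ) : ZMod n) = S 1 + ((c (S 1) : ℕ) : ZMod n)
      rw [← h1, h3]
      push_cast
      ring
    constructor
    · intro e
      cases e with
      | zero => exact ⟨S 0 + ((Aa 0 : ℕ) : ZMod n), rfl⟩
      | succ e =>
        refine ⟨S (1 + 2 * e), ?_⟩
        rw [Function.iterate_succ_apply', hiter e 1]
        exact hJ.symm
    · intro e
      rw [hJ, ← Function.iterate_succ_apply]
      have h0 : S 1 = S (1 + (2 * (e + 1)) * T) := (hperk (2 * (e + 1)) 1).symm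
      have harg : 1 + (2 * (e + 1)) * T = (1 + 2 * (e + 1) * T - 2 * (e + 1)) + 2 * (e + 1) := by
        have : 2 * (e + 1) ≤ 2 * (e + 1) * T := Nat.le_mul_of_pos_right _ (by omega)
        omega
      rw [h0, harg, hiter (e + 1) _]
      exact hblackall _
  done

end Dynamics
section Construction

variable {n : ℕ} [NeZero n]

lemma chain_construction (c : ZMod n → ℕ) (hch : ∀ v : ZMod n, c v ≤ c (v + 1) + 1)
    {i j : ZMod n} {a0 : ℕ} (h1 : 1 ≤ a0) (ha : a0 < c i)
    (hij : j = i + ((a0 : ℕ) : ZMod n))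
    (hi : CyclicallyBlack n c i) (hj : CyclicallyBlack n c j) :
    ∃ (K : ℕ) (S : ℕ → ZMod n) (Aa : ℕ → ℕ), 1 ≤ K ∧ S 0 = i ∧ Aa 0 = a0 ∧
      S (2 * K) = i ∧ Aa (2 * K) = a0 ∧
      (∀ t, 1 ≤ Aa t) ∧ (∀ t, S t = S (t + 1) + ((Aa (t + 1) : ℕ) : ZMod n)) ∧
      (∀ t, Aa t + Aa (t + 1) = c (S (t + 1))) ∧ (∀ t, Aa t < c (S t)) ∧
      (∀ t, Black n c (S (t + 1))) := by
  classical
  set th := thetaMap n c with hthdef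
  obtain ⟨Ki, hKi1, hKi⟩ := exists_period th hi.1
  obtain ⟨Kj, hKj1, hKj⟩ := exists_period th hj.1
  set K := Ki * Kj with hKdef
  have hK1 : 1 ≤ K := Nat.mul_pos hKi1 hKj1
  have hKfix : th^[K] i = i := by
    rw [hKdef, Function.iterate_mul]
    exact Function.iterate_fixed hKi Kj
  have hKfixj : th^[K] j = j := by
    rw [hKdef, Nat.mul_comm, Function.iterate_mul]
    exact Function.iterate_fixed hKj Ki
  set Orb : ZMod n → Prop := fun v => (∃ e, v = th^[e] i) ∨ (∃ e, v = th^[e] j)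
    with hOrbdef
  set φ : ZMod n → ZMod n := fun v => th^[K - 1] v with hφdef
  have horb_black : ∀ v, Orb v → Black n c v := by
    rintro v (⟨e, rfl⟩ | ⟨e, rfl⟩)
    · exact hi.2 e
    · exact hj.2 e
  have hcomm : ∀ (m e : ℕ) (x : ZMod n), th^[m] (th^[e] x) = th^[e] (th^[m] x) := by
    intro m e x
    rw [← Function.iterate_add_apply, Nat.add_comm, Function.iterate_add_apply]
  have horb_per : ∀ v, Orb v → th^[K] v = v := by
    rintro v (⟨e, rfl⟩ | ⟨e, rfl⟩)
    · rw [hcomm, hKfix]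
    · rw [hcomm, hKfixj]
  have hφθ : ∀ v, Orb v → th (φ v) = v := by
    intro v hv
    rw [hφdef]
    show th (th^[K - 1] v) = v
    have h := Function.iterate_succ_apply' th (K - 1) v
    rw [show (K - 1).succ = K from by omega] at h
    rw [← h]
    exact horb_per v hv
  have hφorb : ∀ v, Orb v → Orb (φ v) := by
    rintro v (⟨e, rfl⟩ | ⟨e, rfl⟩)
    · exact Or.inl ⟨K - 1 + e, by rw [hφdef]; simp [Function.iterate_add_apply]⟩
    · exact Or.inr ⟨K - 1 + e, by rw [hφdef]; simp [Function.iterate_add_apply]⟩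
  set S : ℕ → ZMod n := fun t => if Even t then φ^[t / 2] i else φ^[t / 2 + 1] j
    with hSdef
  have hS0 : S 0 = i := by simp [hSdef]
  have hS1 : S 1 = φ j := by
    rw [hSdef]
    simp [Nat.not_even_one]
  have hSorb : ∀ t, Orb (S t) := by
    intro t
    rw [hSdef]
    by_cases he : Even t
    · exact Or.inl ⟨(K - 1) * (t / 2), by simp [he, hφdef, Function.iterate_mul]⟩
    · exact Or.inr ⟨(K - 1) * (t / 2 + 1), by simp [he, hφdef, Function.iterate_mul]⟩
  have hpar : ∀ t : ℕ, Even (t + 2) ↔ Even t := by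
    intro t
    rw [Nat.even_add_one, Nat.even_add_one, not_not]
  have hS2 : ∀ t, S (t + 2) = φ (S t) := by
    intro t
    have h2 : (t + 2) / 2 = t / 2 + 1 := by omega
    simp only [hSdef]
    by_cases he : Even t
    · have he2 : Even (t + 2) := (hpar t).mpr he
      rw [if_pos he2, if_pos he, h2, Function.iterate_succ_apply']
    · have he2 : ¬ Even (t + 2) := fun h => he ((hpar t).mp h)
      rw [if_neg he2, if_neg he, h2, Function.iterate_succ_apply']
  have hφfix : ∀ (v : ZMod n), th^[K] v = v → φ^[K] v = v := by
    intro v hv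
    rw [hφdef]
    show (th^[K - 1])^[K] v = v
    rw [← Function.iterate_mul]
    have : (K - 1) * K = K * (K - 1) := by ring
    rw [this, Function.iterate_mul]
    exact Function.iterate_fixed hv (K - 1)
  have hS2K : S (2 * K) = i := by
    simp only [hSdef]
    have he : Even (2 * K) := ⟨K, by ring⟩
    rw [if_pos he]
    have h2 : 2 * K / 2 = K := by omega
    rw [h2]
    exact hφfix i hKfix
  have hS2K1 : S (2 * K - 1) = j := by
    simp only [hSdef]
    have he : ¬ Even (2 * K - 1) := by
      rw [Nat.even_sub (by omega)]
      simp [Nat.even_mul]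
    rw [if_neg he]
    have h2 : (2 * K - 1) / 2 + 1 = K := by omega
    rw [h2]
    exact hφfix j hKfixj
  -- the sequence of lengths
  set Aa : ℕ → ℕ :=
    fun t => Nat.rec (motive := fun _ => ℕ) a0 (fun t prev => c (S (t + 1)) - prev) t
    with hAadef
  have hAa0 : Aa 0 = a0 := rfl
  have hAas : ∀ t, Aa (t + 1) = c (S (t + 1)) - Aa t := fun t => rfl
  -- the invariant
  have Inv : ∀ t, 1 ≤ Aa t ∧ Aa t < c (S t) ∧
      th (S (t + 1)) = S t + ((Aa t : ℕ) : ZMod n) := by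
    intro t
    induction t with
    | zero =>
      refine ⟨h1, by rw [hS0, hAa0]; exact ha, ?_⟩
      rw [hS1, hφθ j (Or.inr ⟨0, rfl⟩), hS0, hAa0]
      exact hij
    | succ t ih =>
      obtain ⟨ht1, ht2, ht3⟩ := ih
      have hkey : Aa t < c (S (t + 1)) := step_lemma c hch ht2 ht3
      have hthS : th (S (t + 1)) = S (t + 1) + ((c (S (t + 1)) : ℕ) : ZMod n) := rfl
      refine ⟨by rw [hAas]; omega, by rw [hAas]; omega, ?_⟩
      rw [hS2, hφθ _ (hSorb t), hAas, Nat.cast_sub hkey.le]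
      rw [hthS] at ht3
      linear_combination -ht3
  have hkeyall : ∀ t, Aa t < c (S (t + 1)) :=
    fun t => step_lemma c hch (Inv t).2.1 (Inv t).2.2
  have hsum : ∀ t, Aa t + Aa (t + 1) = c (S (t + 1)) := by
    intro t
    rw [hAas]
    have := hkeyall t
    omega
  have hrel : ∀ t, S t = S (t + 1) + ((Aa (t + 1) : ℕ) : ZMod n) := by
    intro t
    have h3 := (Inv (t + 1)).2.2
    rw [hS2, hφθ _ (hSorb t)] at h3
    exact h3
  -- closure of the lengths via the rotation number argument
  set X : ℕ → ℤ := fun t => (i.val : ℤ) - ∑ s ∈ Finset.range t, (Aa (s + 1) : ℤ)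
    with hXdef
  have hXs : ∀ t, X (t + 1) = X t - (Aa (t + 1) : ℤ) := by
    intro t
    rw [hXdef]
    simp only [Finset.sum_range_succ]
    ring
  have hXc : ∀ t, ((X t : ℤ) : ZMod n) = S t := by
    intro t
    induction t with
    | zero =>
      rw [hS0, hXdef]
      simpa using cast_intCast_val i
    | succ t ih =>
      rw [hXs]
      push_cast
      rw [ih, hrel t]
      push_cast
      ring
  have htlX : ∀ t, tl c (X (t + 1)) = X t + (Aa t : ℤ) := by
    intro t
    have h0 : tl c (X (t + 1)) = X (t + 1) + (c (S (t + 1)) : ℤ) := by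
      rw [tl, hXc]
    rw [h0, hXs]
    have := hsum t
    push_cast
    omega
  have htl2 : ∀ t, tl c (X (t + 2)) = X t := by
    intro t
    have := htlX (t + 1)
    have h2 := hXs (t + 1)
    rw [show t + 1 + 1 = t + 2 by omega] at this
    rw [this, hXs t]
    ring
  have hiterX : ∀ (s t : ℕ), (tl c)^[s] (X (t + 2 * s)) = X t := by
    intro s
    induction s with
    | zero => intro t; simp
    | succ s ih =>
      intro t
      have harg : t + 2 * (s + 1) = (t + 2) + 2 * s := by omega
      rw [harg, Function.iterate_succ_apply', ih (t + 2), htl2 t]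
  have hxc : ((X (2 * K) : ℤ) : ZMod n) = i := by rw [hXc, hS2K]
  have hyc : ((X (2 * K - 1) : ℤ) : ZMod n) = j := by rw [hXc, hS2K1]
  have hrot := rot c hch K hKfix hKfixj hxc hyc
  have htKx : (tl c)^[K] (X (2 * K)) = X 0 := by
    have := hiterX K 0
    rwa [Nat.zero_add] at this
  have htKy : (tl c)^[K] (X (2 * K - 1)) = X 0 + (Aa 0 : ℤ) := by
    have h0 := Function.iterate_succ_apply' (tl c) (K - 1) (X (2 * K - 1))
    rw [show (K - 1).succ = K from by omega] at h0
    have h1 : (tl c)^[K - 1] (X (2 * K - 1)) = X 1 := by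
      have := hiterX (K - 1) 1
      rwa [show 1 + 2 * (K - 1) = 2 * K - 1 by omega] at this
    rw [h0, h1, htlX 0]
  have hclose : Aa (2 * K) = a0 := by
    have h2 := hXs (2 * K - 1)
    rw [show 2 * K - 1 + 1 = 2 * K by omega] at h2
    rw [htKx, htKy] at hrot
    have : (Aa (2 * K) : ℤ) = (Aa 0 : ℤ) := by omega
    rw [hAa0] at this
    exact_mod_cast this
  exact ⟨K, S, Aa, hK1, hS0, hAa0, hS2K, hclose, fun t => (Inv t).1, hrel, hsum,
    fun t => (Inv t).2.1, fun t => horb_black _ (hSorb (t + 1))⟩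

end Construction
section FinalAux

open Quiver MonomialPresentation

variable {n : ℕ} [NeZero n]

lemma sigma_castTgt {v w w' : ZMod n} (h : w = w') (r : Quiver.Path v w) :
    (⟨v, w, r⟩ : PathIn (ZMod n)) = ⟨v, w', castTgt h r⟩ := by subst h; rfl

end FinalAux

open MonomialPresentation in
/-- Proposition 6.2: in a monomial Nakayama algebra `A = kZ_n/I` a nonzero nontrivial
path `p` is perfect if and only if both `s(p)` and `t(p)` are `θ`-cyclically black,
where `c_i = dim_k Ae_i`. -/
theorem nakayama_perfect_path_iff_cyclically_black (k : Type u) (A : Type v) (n : ℕ)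
    [NeZero n] [Field k] [Ring A] [Algebra k A] [FiniteDimensional k A]
    (P : MonomialPresentation k A (ZMod n)) (c : ZMod n → ℕ)
    (hc : ∀ i : ZMod n, c i = Module.finrank k
      ((Submodule.span A {P.ι (Quiver.Path.nil : Quiver.Path i i)}).restrictScalars k))
    {i j : ZMod n} (p : Quiver.Path i j) (hp : ¬ P.Z p) (hlen : 1 ≤ p.length) :
    P.IsPerfectPath ⟨i, j, p⟩ ↔ (CyclicallyBlack n c i ∧ CyclicallyBlack n c j) := by
  have hcN : ∀ v : ZMod n, c v = NN P v := by
    intro v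
    rw [hc v, finrank_eq_NN]
  have hzc : ∀ {v w : ZMod n} (r : Quiver.Path v w), P.Z r ↔ c v ≤ r.length := by
    intro v w r
    rw [hcN v]
    exact Z_iff_NN P r
  have hch : ∀ v : ZMod n, c v ≤ c (v + 1) + 1 := by
    intro v
    rw [hcN v, hcN (v + 1)]
    exact NN_le_succ P v
  constructor
  · -- forward direction
    rintro ⟨N, cc, h0, hl, hpair⟩
    set T := N + 1 with hTdef
    have hTpos : 0 < T := Nat.succ_pos N
    set e : ℕ → PathIn (ZMod n) :=
      fun t => cc ⟨t % T, by have := Nat.mod_lt t hTpos; omega⟩ with hedef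
    have he0 : e 0 = ⟨i, j, p⟩ := by
      simp only [hedef]
      have hf : (⟨0 % T, by have := Nat.mod_lt 0 hTpos; omega⟩ : Fin (N + 2)) = 0 := by
        ext
        simp [Nat.zero_mod]
      rw [hf, h0]
    have heper : ∀ t, e (t + T) = e t := by
      intro t
      simp only [hedef]
      congr 1
      ext
      simp [Nat.add_mod_right]
    have hepair : ∀ t, P.PerfectPairS (e t) (e (t + 1)) := by
      intro t
      have hr : t % T < T := Nat.mod_lt t hTpos
      have h1 : e t = cc (Fin.castSucc ⟨t % T, hr⟩) := by
        simp only [hedef]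
        congr 1
      by_cases hcase : t % T + 1 < T
      · have hmod : (t + 1) % T = t % T + 1 := by
          rw [Nat.add_mod t 1 T, Nat.mod_eq_of_lt (show 1 < T by omega),
            Nat.mod_eq_of_lt hcase]
        have h2 : e (t + 1) = cc (Fin.succ ⟨t % T, hr⟩) := by
          simp only [hedef]
          congr 1
          ext
          simp [hmod]
        rw [h1, h2]
        exact hpair ⟨t % T, hr⟩
      · have h3 : t % T + 1 = T := by omega
        have hdm := Nat.div_add_mod t T
        have h4 : t + 1 = T * (t / T + 1) := by
          rw [Nat.mul_add, Nat.mul_one]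
          omega
        have hmod : (t + 1) % T = 0 := by
          rw [h4, Nat.mul_mod_right]
        have h2 : e (t + 1) = cc 0 := by
          simp only [hedef]
          congr 1
          ext
          simp [hmod]
        have hlast : cc (Fin.succ ⟨t % T, hr⟩) = cc (Fin.last (N + 1)) := by
          congr 1
          ext
          simp
          omega
        rw [h1, h2, h0, ← hl, ← hlast]
        exact hpair ⟨t % T, hr⟩
    set S : ℕ → ZMod n := fun t => (e t).1 with hSdef
    set Aa : ℕ → ℕ := fun t => (e t).2.2.length with hAdef
    have master : ∀ t, S t = S (t + 1) + ((Aa (t + 1) : ℕ) : ZMod n) ∧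
        Aa t + Aa (t + 1) = c (S (t + 1)) ∧ Black n c (S (t + 1)) := by
      intro t
      obtain ⟨i', j', l', p', q', hx, hy, hpq⟩ := hepair t
      rw [perfectPair_iff P c hzc hch] at hpq
      obtain ⟨hp1, hq1, hsum', ha', hbl'⟩ := hpq
      have hS1 : S t = i' := by simp only [hSdef]; rw [hx]
      have hS2 : S (t + 1) = l' := by simp only [hSdef]; rw [hy]
      have hA1 : Aa t = p'.length := by simp only [hAdef]; rw [hx]
      have hA2 : Aa (t + 1) = q'.length := by simp only [hAdef]; rw [hy]
      refine ⟨?_, ?_, ?_⟩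
      · rw [hS1, hS2, hA2]; exact cycle_target_eq q'
      · rw [hA1, hA2, hS2]; exact hsum'
      · rw [hS2]; exact hbl'
    have hSper : ∀ t, S (t + T) = S t := by
      intro t
      simp only [hSdef]
      rw [heper]
    have hdyn := dynamics_lemma c S Aa T hTpos hSper (fun t => (master t).1)
      (fun t => (master t).2.1) (fun t => (master t).2.2)
    have hS0 : S 0 = i := by simp only [hSdef]; rw [he0]
    have hA0 : Aa 0 = p.length := by simp only [hAdef]; rw [he0]
    have hj' : S 0 + ((Aa 0 : ℕ) : ZMod n) = j := by
      rw [hS0, hA0]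
      exact (cycle_target_eq p).symm
    rw [hS0] at hdyn
    rw [hS0] at hj'
    rw [hj'] at hdyn
    exact hdyn
  · -- backward direction
    rintro ⟨hi, hj⟩
    obtain ⟨a0, ha0len⟩ : ∃ m, p.length = m := ⟨_, rfl⟩
    have h1a : 1 ≤ a0 := by omega
    have haa : a0 < c i := by
      rw [hzc] at hp
      omega
    have hij : j = i + ((a0 : ℕ) : ZMod n) := by
      rw [← ha0len]
      exact cycle_target_eq p
    subst hij
    obtain ⟨K, S, Aa, hK1, hS0, hAa0, hS2K, hA2K, hA1, hrel, hsum, hAlt, hblack⟩ :=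
      chain_construction c hch h1a haa rfl hi hj
    refine ⟨2 * K - 1, fun t => ⟨S t.val, S t.val + ((Aa t.val : ℕ) : ZMod n),
      pathFrom (S t.val) (Aa t.val)⟩, ?_, ?_, ?_⟩
    · show (⟨S 0, S 0 + ((Aa 0 : ℕ) : ZMod n), pathFrom (S 0) (Aa 0)⟩ :
        PathIn (ZMod n)) = _
      rw [hS0, hAa0]
      exact congrArg (fun q => (⟨i, i + ((a0 : ℕ) : ZMod n), q⟩ : PathIn (ZMod n)))
        (cycle_path_ext _ p (by simp [ha0len]))
    · have hv : (Fin.last (2 * K - 1 + 1)).val = 2 * K := by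
        simp only [Fin.val_last]
        omega
      show (⟨S (Fin.last (2 * K - 1 + 1)).val, _, _⟩ : PathIn (ZMod n)) = _
      rw [hv, hS2K, hA2K]
      exact congrArg (fun q => (⟨i, i + ((a0 : ℕ) : ZMod n), q⟩ : PathIn (ZMod n)))
        (cycle_path_ext _ p (by simp [ha0len]))
    · intro m
      show P.PerfectPairS
        ⟨S m.castSucc.val, _, pathFrom (S m.castSucc.val) (Aa m.castSucc.val)⟩
        ⟨S m.succ.val, _, pathFrom (S m.succ.val) (Aa m.succ.val)⟩
      have hcs : m.castSucc.val = m.val := rfl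
      have hsc : m.succ.val = m.val + 1 := rfl
      rw [hcs, hsc]
      refine ⟨S m.val, S m.val + ((Aa m.val : ℕ) : ZMod n), S (m.val + 1),
        pathFrom (S m.val) (Aa m.val),
        castTgt (hrel m.val).symm (pathFrom (S (m.val + 1)) (Aa (m.val + 1))),
        rfl, ?_, ?_⟩
      · exact sigma_castTgt (hrel m.val).symm _
      · rw [perfectPair_iff P c hzc hch]
        simp only [length_castTgt, length_pathFrom]
        exact ⟨hA1 _, hA1 _, hsum _, hAlt _, hblack _⟩
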